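/- Let $a \in (-1, 1) \setminus \{0\}$ and define $c(a) = \frac{\pi^2}{6(1-a^2)} - \left(\frac{\ln(1-a)}{a}\right)^2$. Then $c(a) > 0$. Consequently, the matrix $J = 2\sigma^2 \begin{pmatrix} \frac{1}{1-a^2} & -\frac{\ln(1-a)}{a} \\ -\frac{\ln(1-a)}{a} & \frac{\pi^2}{6} \end{pmatrix}$ (with $\sigma^2 > 0$) is positive definite and its inverse equals $\frac{1}{2\sigma^2 c(a)} \begin{pmatrix} \frac{\pi^2}{6} & \frac{\ln(1-a)}{a} \\ \frac{\ln(1-a)}{a} & \frac{1}{1-a^2} \end{pmatrix}$. -/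

import Mathlib

open Real

/-- Strict Cauchy–Schwarz for the sequences `a^n` and `1/(n+1)`. -/
lemma farima_strict_cs (a : ℝ) (ha1 : -1 < a) (ha2 : a < 1) (ha0 : a ≠ 0) :
    (Real.log (1 - a) / a) ^ 2 < (1 / (1 - a ^ 2)) * (Real.pi ^ 2 / 6) := by
  have ha2' : a ^ 2 < 1 := by nlinarith
  have ha2nn : (0:ℝ) ≤ a ^ 2 := sq_nonneg a
  set L : ℝ := Real.log (1 - a) / a with hL
  -- A = ∑ (a^n)^2
  have hA : HasSum (fun n : ℕ => (a ^ n) ^ 2) (1 / (1 - a ^ 2)) := by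
    have := hasSum_geometric_of_lt_one ha2nn ha2'
    simpa [one_div, ← pow_mul, mul_comm] using this
  -- B = ∑ (1/(n+1))^2
  have hB : HasSum (fun n : ℕ => (1 / ((n : ℝ) + 1)) ^ 2) (Real.pi ^ 2 / 6) := by
    have h := (hasSum_nat_add_iff' (f := fun n : ℕ => (1 : ℝ) / (n : ℝ) ^ 2) 1).mpr
      hasSum_zeta_two
    simpa [div_pow] using h
  -- C = ∑ a^n/(n+1)
  have hC : HasSum (fun n : ℕ => a ^ n * (1 / ((n : ℝ) + 1))) (-L) := by
    have h := hasSum_pow_div_log_of_abs_lt_one (x := a) (by rw [abs_lt]; exact ⟨ha1, ha2⟩)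
    have h2 := h.mul_left a⁻¹
    have he : ∀ n : ℕ, a⁻¹ * (a ^ (n + 1) / ((n : ℝ) + 1)) = a ^ n * (1 / ((n : ℝ) + 1)) := by
      intro n
      field_simp [pow_succ]
      ring
    rw [funext he] at h2
    have e : -L = a⁻¹ * -Real.log (1 - a) := by rw [hL]; ring
    rw [e]; exact h2
  have hBpos : (0:ℝ) < Real.pi ^ 2 / 6 := by positivity
  set t : ℝ := (-L) / (Real.pi ^ 2 / 6) with ht
  -- the sum ∑ (a^n - t/(n+1))^2
  have hF : HasSum (fun n : ℕ => (a ^ n - t * (1 / ((n : ℝ) + 1))) ^ 2)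
      (1 / (1 - a ^ 2) - 2 * t * (-L) + t ^ 2 * (Real.pi ^ 2 / 6)) := by
    have h := (hA.add ((hC.mul_left (-2 * t)).add (hB.mul_left (t ^ 2))))
    have e1 : (fun n : ℕ => (a ^ n - t * (1 / ((n : ℝ) + 1))) ^ 2) =
        fun n : ℕ => (a ^ n) ^ 2 +
          (-2 * t * (a ^ n * (1 / ((n : ℝ) + 1))) + t ^ 2 * (1 / ((n : ℝ) + 1)) ^ 2) := by
      funext n
      ring
    have e2 : 1 / (1 - a ^ 2) - 2 * t * (-L) + t ^ 2 * (Real.pi ^ 2 / 6) =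
        1 / (1 - a ^ 2) + (-2 * t * (-L) + t ^ 2 * (Real.pi ^ 2 / 6)) := by ring
    rw [e1, e2]
    exact h
  have hfnn : ∀ n : ℕ, 0 ≤ (a ^ n - t * (1 / ((n : ℝ) + 1))) ^ 2 := fun n => sq_nonneg _
  -- some term is strictly positive
  have hpos : 0 < 1 / (1 - a ^ 2) - 2 * t * (-L) + t ^ 2 * (Real.pi ^ 2 / 6) := by
    have key : ∃ k : ℕ, 0 < (a ^ k - t * (1 / ((k : ℝ) + 1))) ^ 2 := by
      by_cases h0 : a ^ 0 - t * (1 / (((0 : ℕ) : ℝ) + 1)) = 0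
      · by_cases h1 : a ^ 1 - t * (1 / (((1 : ℕ) : ℝ) + 1)) = 0
        · refine ⟨2, ?_⟩
          have ht1 : t = 1 := by
            simp at h0
            linarith
          have ha12 : a = 1 / 2 := by
            rw [ht1] at h1
            push_cast at h1
            norm_num at h1
            linarith
          have he : a ^ 2 - t * (1 / (((2 : ℕ) : ℝ) + 1)) = 1 / 4 - 1 / 3 := by
            rw [ha12, ht1]
            norm_num
          rw [he]
          norm_num
        · exact ⟨1, by positivity⟩
      · exact ⟨0, by positivity⟩
    obtain ⟨k, hk⟩ := key
    calc (0:ℝ) < (a ^ k - t * (1 / ((k : ℝ) + 1))) ^ 2 := hk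
    _ ≤ _ := le_hasSum hF k (fun j _ => hfnn j)
  -- conclude
  have hkey : (-L) ^ 2 / (Real.pi ^ 2 / 6) < 1 / (1 - a ^ 2) := by
    have ht' : 2 * t * (-L) - t ^ 2 * (Real.pi ^ 2 / 6) = (-L) ^ 2 / (Real.pi ^ 2 / 6) := by
      rw [ht]
      field_simp
      ring
    nlinarith [hpos]
  calc L ^ 2 = ((-L) ^ 2 / (Real.pi ^ 2 / 6)) * (Real.pi ^ 2 / 6) := by
        field_simp
    _ < (1 / (1 - a ^ 2)) * (Real.pi ^ 2 / 6) := mul_lt_mul_of_pos_right hkey hBpos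

/-- Positivity of `c(a) = π²/(6(1-a²)) - (ln(1-a)/a)²` for `a ∈ (-1,1) \ {0}`,
positive-definiteness of the FARIMA(1,d,0) information matrix `J`, and the explicit
formula for its inverse. -/
theorem farima_information_matrix (a σ2 : ℝ) (ha1 : -1 < a) (ha2 : a < 1) (ha0 : a ≠ 0)
    (hσ : 0 < σ2) :
    0 < Real.pi ^ 2 / (6 * (1 - a ^ 2)) - (Real.log (1 - a) / a) ^ 2 ∧
    Matrix.PosDef ((2 * σ2) •
      !![1 / (1 - a ^ 2), -(Real.log (1 - a) / a);
         -(Real.log (1 - a) / a), Real.pi ^ 2 / 6]) ∧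
    ((2 * σ2) •
      !![1 / (1 - a ^ 2), -(Real.log (1 - a) / a);
         -(Real.log (1 - a) / a), Real.pi ^ 2 / 6])⁻¹ =
      (1 / (2 * σ2 * (Real.pi ^ 2 / (6 * (1 - a ^ 2)) - (Real.log (1 - a) / a) ^ 2))) •
      !![Real.pi ^ 2 / 6, Real.log (1 - a) / a;
         Real.log (1 - a) / a, 1 / (1 - a ^ 2)] := by
  have ha2' : (0:ℝ) < 1 - a ^ 2 := by nlinarith
  have hcs := farima_strict_cs a ha1 ha2 ha0
  set L : ℝ := Real.log (1 - a) / a with hLdef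
  have hprod : (1 / (1 - a ^ 2)) * (Real.pi ^ 2 / 6) = Real.pi ^ 2 / (6 * (1 - a ^ 2)) := by
    field_simp
  have hc : 0 < Real.pi ^ 2 / (6 * (1 - a ^ 2)) - L ^ 2 := by
    rw [← hprod]
    linarith
  have hcne : Real.pi ^ 2 / (6 * (1 - a ^ 2)) - L ^ 2 ≠ 0 := ne_of_gt hc
  have hσne : σ2 ≠ 0 := ne_of_gt hσ
  refine ⟨hc, ?_, ?_⟩
  · rw [Matrix.posDef_iff_dotProduct_mulVec]
    constructor
    · ext i j
      fin_cases i <;> fin_cases j <;>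
        simp [Matrix.conjTranspose_apply]
    · intro x hx
      have hx01 : x 0 ≠ 0 ∨ x 1 ≠ 0 := by
        by_contra h
        push_neg at h
        apply hx
        funext i
        fin_cases i <;> simp [h.1, h.2]
      have hq : dotProduct (star x)
          (Matrix.mulVec ((2 * σ2) • !![1 / (1 - a ^ 2), -L; -L, Real.pi ^ 2 / 6]) x) =
          2 * σ2 * ((1 / (1 - a ^ 2)) * x 0 ^ 2 - 2 * L * x 0 * x 1
            + (Real.pi ^ 2 / 6) * x 1 ^ 2) := by
        simp [dotProduct, Matrix.mulVec, Fin.sum_univ_two, Matrix.smul_apply]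
        ring
      rw [hq]
      have hApos : (0:ℝ) < 1 / (1 - a ^ 2) := by positivity
      have hBpos : (0:ℝ) < Real.pi ^ 2 / 6 := by positivity
      set A := 1 / (1 - a ^ 2) with hAdef
      set B := Real.pi ^ 2 / 6 with hBdef
      have hQ : 0 < A * x 0 ^ 2 - 2 * L * x 0 * x 1 + B * x 1 ^ 2 := by
        rcases hx01 with h | h
        · have h0 : 0 < x 0 ^ 2 := by
            rcases h.lt_or_gt with h' | h' <;> nlinarith
          nlinarith [sq_nonneg (B * x 1 - L * x 0),
            mul_pos (sub_pos.mpr hcs) h0, hBpos, hApos]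
        · have h1 : 0 < x 1 ^ 2 := by
            rcases h.lt_or_gt with h' | h' <;> nlinarith
          nlinarith [sq_nonneg (A * x 0 - L * x 1),
            mul_pos (sub_pos.mpr hcs) h1, hBpos, hApos]
      have h2σ : (0:ℝ) < 2 * σ2 := by linarith
      exact mul_pos h2σ hQ
  · have hne : 1 / (1 - a ^ 2) * (Real.pi ^ 2 / 6) - L ^ 2 ≠ 0 := by
      rw [hprod]; exact hcne
    rw [show Real.pi ^ 2 / (6 * (1 - a ^ 2)) - L ^ 2
        = 1 / (1 - a ^ 2) * (Real.pi ^ 2 / 6) - L ^ 2 by rw [hprod]]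
    set A := 1 / (1 - a ^ 2) with hAdef
    set B := Real.pi ^ 2 / 6 with hBdef
    apply Matrix.inv_eq_right_inv
    rw [smul_mul_assoc, Matrix.mul_smul, Matrix.mul_fin_two, Matrix.one_fin_two, smul_smul]
    ext i j
    fin_cases i <;> fin_cases j <;>
      · simp only [Matrix.smul_apply, smul_eq_mul, Matrix.cons_val', Matrix.cons_val_zero,
          Matrix.cons_val_one, Matrix.head_cons, Matrix.head_fin_const, Matrix.empty_val',
          Matrix.cons_val_fin_one, Matrix.of_apply, Fin.zero_eta, Fin.mk_one]
        field_simp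
        ring
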